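/- For every n ≥ 1, in the polynomial ring ℤ[t] one has ∑_{w ∈ S_n} t^{des(w)} = ∑_{w ∈ Ŝ_n} t^{des(w)} · (1+t)^{n−1−2·des(w)}. (Equivalently, the Eulerian polynomial A_n(t), which is the h-polynomial of the (n−1)-dimensional permutohedron, has γ-expansion with γ_r equal to the number of permutations in Ŝ_n with r descents.) -/

import Mathlib

open Classical Polynomial

/-- Number of descents of a permutation `w` of `Fin n`: indices `i` with
`w(i) > w(i+1)` (0-indexed positions `i` with `i+1 < n`). -/
def des {n : ℕ} (w : Equiv.Perm (Fin n)) : ℕ :=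
  (Finset.univ.filter fun i : Fin n =>
    ∃ j : Fin n, (j : ℕ) = (i : ℕ) + 1 ∧ w j < w i).card

/-- `w` has no final descent: it is not the case that `w(n-1) > w(n)`
(1-indexed), i.e. the last two entries do not descend. -/
def NoFinalDescent {n : ℕ} (w : Equiv.Perm (Fin n)) : Prop :=
  ∀ i j : Fin n, (i : ℕ) + 1 = (j : ℕ) → (j : ℕ) + 1 = n → ¬ w j < w i

/-- `w` has no double descent: no `i` with `w(i) > w(i+1) > w(i+2)`. -/
def NoDoubleDescent {n : ℕ} (w : Equiv.Perm (Fin n)) : Prop :=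
  ∀ i j k : Fin n, (i : ℕ) + 1 = (j : ℕ) → (j : ℕ) + 1 = (k : ℕ) →
    ¬ (w j < w i ∧ w k < w j)


noncomputable section

/-- descent count of a word -/
def desL : List ℕ → ℕ
  | x :: y :: r => (if y < x then 1 else 0) + desL (y :: r)
  | _ => 0

/-- no initial descent -/
def NI : List ℕ → Prop
  | x :: y :: _ => ¬ y < x
  | _ => True

/-- no double descent -/
def NDD : List ℕ → Prop
  | x :: y :: z :: r => ¬(y < x ∧ z < y) ∧ NDD (y :: z :: r)
  | _ => True

def TG (l : List ℕ) : Prop := NI l ∧ NDD l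

/-- all words on the value set V -/
def words (V : Finset ℕ) : Finset (List ℕ) := (V.sort (· ≤ ·)).permutations.toFinset

lemma mem_words {V : Finset ℕ} {l : List ℕ} :
    l ∈ words V ↔ l.Nodup ∧ l.toFinset = V := by
  simp only [words, List.mem_toFinset, List.mem_permutations]
  constructor
  · intro h
    refine ⟨h.symm.nodup (V.sort_nodup _), ?_⟩
    rw [List.toFinset_eq_of_perm _ _ h, Finset.sort_toFinset]
  · rintro ⟨h1, h2⟩
    refine (List.perm_ext_iff_of_nodup h1 (V.sort_nodup _)).2 fun a => ?_
    rw [Finset.mem_sort, ← h2, List.mem_toFinset]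

lemma length_mem_words {V : Finset ℕ} {l : List ℕ} (h : l ∈ words V) :
    l.length = V.card := by
  rw [words, List.mem_toFinset, List.mem_permutations] at h
  rw [h.length_eq, Finset.length_sort]

lemma words_empty : words ∅ = {[]} := by
  ext l
  rw [Finset.mem_singleton, mem_words]
  constructor
  · rintro ⟨h1, h2⟩
    exact (List.toFinset_eq_empty_iff _).1 h2
  · rintro rfl; simp

lemma ne_nil_of_mem_words {V : Finset ℕ} {l : List ℕ} (h : l ∈ words V)
    (hV : V.Nonempty) : l ≠ [] := by
  rw [mem_words] at h
  obtain ⟨x, hx⟩ := hV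
  intro hnil
  rw [hnil] at h
  rw [← h.2] at hx
  simp at hx

end

noncomputable section

lemma desL_cons_cons (x y : ℕ) (r : List ℕ) :
    desL (x :: y :: r) = (if y < x then 1 else 0) + desL (y :: r) := rfl

lemma desL_max_cons (M : ℕ) (b : List ℕ) (hb : ∀ x ∈ b, x < M) :
    desL (M :: b) = desL b + (if b = [] then 0 else 1) := by
  cases b with
  | nil => simp [desL]
  | cons c r =>
    have hc : c < M := hb c List.mem_cons_self
    rw [desL_cons_cons, if_pos hc]
    simp
    omega

lemma desL_append (M : ℕ) (b : List ℕ) (hb : ∀ x ∈ b, x < M) :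
    ∀ a : List ℕ, (∀ x ∈ a, x < M) →
      desL (a ++ M :: b) = desL a + desL b + (if b = [] then 0 else 1) := by
  intro a
  induction a with
  | nil => intro _; simpa [desL] using desL_max_cons M b hb
  | cons x a' ih =>
    intro ha
    cases a' with
    | nil =>
      have hx : x < M := ha x (by simp)
      have h1 := desL_max_cons M b hb
      show desL (x :: M :: b) = _
      rw [desL_cons_cons, if_neg (by omega), h1]
      simp [desL]
    | cons y r =>
      have h2 := ih (fun z hz => ha z (List.mem_cons_of_mem _ hz))
      show desL (x :: ((y :: r) ++ M :: b)) = _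
      have : (y :: r) ++ M :: b = y :: (r ++ M :: b) := rfl
      rw [this, desL_cons_cons, ← this, h2, desL_cons_cons]
      omega

lemma NDD_max_cons (M : ℕ) (b : List ℕ) (hb : ∀ x ∈ b, x < M) :
    NDD (M :: b) ↔ TG b := by
  cases b with
  | nil => simp [NDD, TG, NI]
  | cons c r =>
    cases r with
    | nil => simp [NDD, TG, NI]
    | cons d r' =>
      have hc : c < M := hb c (by simp)
      show (¬(c < M ∧ d < c) ∧ NDD (c :: d :: r')) ↔ _
      unfold TG NI
      constructor
      · rintro ⟨h1, h2⟩
        exact ⟨fun hdc => h1 ⟨hc, hdc⟩, h2⟩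
      · rintro ⟨h1, h2⟩
        exact ⟨fun h => h1 h.2, h2⟩

lemma NDD_append (M : ℕ) (b : List ℕ) (hb : ∀ x ∈ b, x < M) :
    ∀ a : List ℕ, (∀ x ∈ a, x < M) →
      (NDD (a ++ M :: b) ↔ NDD a ∧ TG b) := by
  intro a
  induction a with
  | nil =>
    intro _
    have := NDD_max_cons M b hb
    simpa [NDD] using this
  | cons x a' ih =>
    intro ha
    have hx : x < M := ha x (by simp)
    cases a' with
    | nil =>
      cases b with
      | nil => simp [NDD, TG, NI]
      | cons c r =>
        show (¬(M < x ∧ c < M) ∧ NDD (M :: c :: r)) ↔ NDD [x] ∧ TG (c :: r)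
        rw [NDD_max_cons M _ hb]
        have : ¬(M < x ∧ c < M) := fun h => absurd h.1 (by omega)
        simp [NDD, this]
    | cons y r =>
      have h2 := ih (fun z hz => ha z (List.mem_cons_of_mem _ hz))
      cases r with
      | nil =>
        have hy : y < M := ha y (by simp)
        show (¬(y < x ∧ M < y) ∧ NDD (y :: M :: b)) ↔ NDD [x, y] ∧ TG b
        have h3 : NDD ([y] ++ M :: b) ↔ NDD [y] ∧ TG b := h2
        simp only [List.cons_append, List.nil_append] at h3
        have : ¬(y < x ∧ M < y) := fun h => absurd h.2 (by omega)
        simp [NDD, this, h3]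
      | cons z r' =>
        show (¬(y < x ∧ z < y) ∧ NDD ((y :: z :: r') ++ M :: b)) ↔
          (¬(y < x ∧ z < y) ∧ NDD (y :: z :: r')) ∧ TG b
        rw [h2]
        tauto

lemma NI_max_cons (M : ℕ) (b : List ℕ) (hb : ∀ x ∈ b, x < M) :
    NI (M :: b) ↔ b = [] := by
  cases b with
  | nil => simp [NI]
  | cons c r =>
    have hc : c < M := hb c (by simp)
    simp [NI, hc]

lemma NI_append (M : ℕ) (b : List ℕ) (x : ℕ) (a' : List ℕ)
    (hx : x < M) : NI ((x :: a') ++ M :: b) ↔ NI (x :: a') := by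
  cases a' with
  | nil =>
    show NI (x :: M :: b) ↔ NI [x]
    simp [NI]
    omega
  | cons y r => exact Iff.rfl

lemma TG_append (M : ℕ) (a b : List ℕ) (ha : ∀ x ∈ a, x < M) (hb : ∀ x ∈ b, x < M) :
    TG (a ++ M :: b) ↔ TG a ∧ TG b ∧ (a = [] → b = []) := by
  cases a with
  | nil =>
    show TG (M :: b) ↔ _
    unfold TG
    rw [NI_max_cons M b hb, NDD_max_cons M b hb]
    constructor
    · rintro ⟨rfl, _⟩
      simp [NI, NDD, TG]
    · rintro ⟨_, h2, h3⟩
      have := h3 rfl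
      subst this
      simp [NI, NDD, TG]
  | cons x a' =>
    have hx : x < M := ha x (by simp)
    rw [show (((x :: a') ++ M :: b) = x :: (a' ++ M :: b)) from rfl] at *
    unfold TG
    rw [← List.cons_append, NI_append M b x a' hx, NDD_append M b hb _ ha]
    unfold TG
    simp only [List.cons_ne_nil, false_implies, and_true]
    tauto

lemma desL_bound : ∀ l : List ℕ, NDD l → l ≠ [] →
    2 * desL l + (if NI l then 1 else 0) ≤ l.length := by
  intro l
  induction l with
  | nil => intro _ h; exact absurd rfl h
  | cons x l' ih =>
    intro hndd _
    cases l' with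
    | nil => simp [desL, NI]
    | cons y r =>
      by_cases hyx : y < x
      · have hni : ¬ NI (x :: y :: r) := by simp [NI, hyx]
        rw [if_neg hni, desL_cons_cons, if_pos hyx]
        cases r with
        | nil => simp [desL]
        | cons z r' =>
          obtain ⟨h1, h2⟩ := hndd
          have hni2 : NI (y :: z :: r') := by
            simp only [NI]
            intro hzy
            exact h1 ⟨hyx, hzy⟩
          have := ih h2 (by simp)
          rw [if_pos hni2] at this
          simp only [List.length_cons] at *
          omega
      · have hni : NI (x :: y :: r) := hyx
        rw [if_pos hni, desL_cons_cons, if_neg hyx]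
        have hndd2 : NDD (y :: r) := by
          cases r with
          | nil => trivial
          | cons z r' => exact hndd.2
        have := ih hndd2 (by simp)
        simp only [List.length_cons] at *
        omega

lemma TG_bound (l : List ℕ) (h : TG l) (hne : l ≠ []) : 2 * desL l + 1 ≤ l.length := by
  have := desL_bound l h.2 hne
  rw [if_pos h.1] at this
  exact this

end

noncomputable section

lemma takeWhile_app (M : ℕ) (b : List ℕ) :
    ∀ a : List ℕ, (∀ x ∈ a, x ≠ M) →
      (a ++ M :: b).takeWhile (fun x => x ≠ M) = a ∧
      (a ++ M :: b).dropWhile (fun x => x ≠ M) = M :: b := by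
  intro a
  induction a with
  | nil => intro _; simp [List.takeWhile, List.dropWhile]
  | cons x a' ih =>
    intro ha
    have hx : x ≠ M := ha x (by simp)
    have h := ih (fun z hz => ha z (List.mem_cons_of_mem _ hz))
    constructor
    · show List.takeWhile _ (x :: (a' ++ M :: b)) = _
      rw [List.takeWhile_cons_of_pos (by simpa using hx), h.1]
    · show List.dropWhile _ (x :: (a' ++ M :: b)) = _
      rw [List.dropWhile_cons_of_pos (by simpa using hx), h.2]

lemma sum_words_split {R : Type*} [AddCommMonoid R] (V : Finset ℕ) (hV : V.Nonempty)
    (f : List ℕ → R) :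
    ∑ l ∈ words V, f l
      = ∑ A ∈ (V.erase (V.max' hV)).powerset,
          ∑ p ∈ (words A) ×ˢ (words ((V.erase (V.max' hV)) \ A)),
            f (p.1 ++ V.max' hV :: p.2) := by
  set M := V.max' hV with hM
  set E := V.erase M with hE
  have hMV : M ∈ V := V.max'_mem hV
  have hME : M ∉ E := Finset.notMem_erase _ _
  rw [Finset.sum_sigma' E.powerset (fun A => (words A) ×ˢ (words (E \ A)))
      (fun A p => f (p.1 ++ M :: p.2))]
  refine Finset.sum_nbij'
    (i := fun l => ⟨(l.takeWhile (fun x => x ≠ M)).toFinset,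
      (l.takeWhile (fun x => x ≠ M), (l.dropWhile (fun x => x ≠ M)).tail)⟩)
    (j := fun x => x.2.1 ++ M :: x.2.2) ?_ ?_ ?_ ?_ ?_
  · -- i maps into sigma set
    intro l hl
    obtain ⟨hnd, htf⟩ := mem_words.1 hl
    have hdne : l.dropWhile (fun x => x ≠ M) ≠ [] := by
      intro h
      rw [List.dropWhile_eq_nil_iff] at h
      have := h M (by rw [← List.mem_toFinset, htf]; exact hMV)
      simp at this
    have hdhead : (l.dropWhile (fun x => x ≠ M)).head hdne = M := by
      have h0 := List.head_dropWhile_not (fun x : ℕ => decide (x ≠ M)) (l := l) hdne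
      rw [decide_eq_false_iff_not, not_ne_iff] at h0
      exact h0
    have h3 := List.cons_head_tail hdne
    rw [hdhead] at h3
    set a := l.takeWhile (fun x => x ≠ M) with haa
    set bb := (l.dropWhile (fun x => x ≠ M)).tail with hbb
    have hdec : l = a ++ M :: bb := by
      conv_lhs => rw [← List.takeWhile_append_dropWhile (p := fun x => x ≠ M) (l := l)]
      rw [h3]
    have hna : ∀ x ∈ a, x ≠ M := by
      intro x hx
      have := List.mem_takeWhile_imp hx
      simpa using this
    have hnd2 := hnd
    rw [hdec] at hnd2
    obtain ⟨hnda, hndMb, hdisj⟩ := List.nodup_append'.1 hnd2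
    have hVeq : ∀ x, x ∈ V ↔ (x ∈ a ∨ x = M ∨ x ∈ bb) := by
      intro x
      rw [← htf]
      conv_lhs => rw [hdec]
      simp only [List.toFinset_append, List.toFinset_cons, Finset.mem_union,
        Finset.mem_insert, List.mem_toFinset] <;> tauto
    refine Finset.mem_sigma.2 ⟨?_, ?_⟩
    · refine Finset.mem_powerset.2 fun x hx => ?_
      rw [List.mem_toFinset] at hx
      exact Finset.mem_erase.2 ⟨hna x hx, (hVeq x).2 (Or.inl hx)⟩
    · refine Finset.mem_product.2 ⟨mem_words.2 ⟨hnda, rfl⟩,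
        mem_words.2 ⟨(List.nodup_cons.1 hndMb).2, ?_⟩⟩
      ext x
      simp only [List.mem_toFinset, Finset.mem_sdiff, Finset.mem_erase, hE]
      constructor
      · intro hx
        refine ⟨⟨?_, (hVeq x).2 (Or.inr (Or.inr hx))⟩, ?_⟩
        · intro hxM; rw [hxM] at hx; exact (List.nodup_cons.1 hndMb).1 hx
        · intro hxa
          exact hdisj hxa (List.mem_cons_of_mem _ hx)
      · rintro ⟨⟨hxM, hxV⟩, hxa⟩
        rcases (hVeq x).1 hxV with h | h | h
        · exact absurd h hxa
        · exact absurd h hxM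
        · exact h
  · -- j maps into words V
    rintro ⟨A, a, b⟩ hx
    obtain ⟨hA, hab⟩ := Finset.mem_sigma.1 hx
    rw [Finset.mem_powerset] at hA
    obtain ⟨haw, hbw⟩ := Finset.mem_product.1 hab
    obtain ⟨hnda, hta⟩ := mem_words.1 haw
    obtain ⟨hndb, htb⟩ := mem_words.1 hbw
    dsimp only at hA haw hbw hnda hta hndb htb ⊢
    have hMb : M ∉ b := by
      intro h
      have : M ∈ E \ A := by rw [← htb, List.mem_toFinset]; exact h
      exact hME (Finset.mem_sdiff.1 this).1
    have hdisj : (a : List ℕ).Disjoint (M :: b) := by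
      intro x hxa hxMb
      have hxA : x ∈ A := by rw [← hta, List.mem_toFinset]; exact hxa
      rcases List.mem_cons.1 hxMb with rfl | hxb
      · exact hME (hA hxA)
      · have : x ∈ E \ A := by rw [← htb, List.mem_toFinset]; exact hxb
        exact (Finset.mem_sdiff.1 this).2 hxA
    refine mem_words.2 ⟨List.nodup_append'.2 ⟨hnda, List.nodup_cons.2 ⟨hMb, hndb⟩, hdisj⟩, ?_⟩
    ext x
    simp only [List.toFinset_append, List.toFinset_cons, Finset.mem_union, Finset.mem_insert,
      hta, htb]
    constructor
    · rintro (h | rfl | h)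
      · exact Finset.mem_of_mem_erase (hA h)
      · exact hMV
      · exact Finset.mem_of_mem_erase (Finset.mem_sdiff.1 h).1
    · intro hxV
      by_cases hxM : x = M
      · exact Or.inr (Or.inl hxM)
      · by_cases hxA : x ∈ A
        · exact Or.inl hxA
        · exact Or.inr (Or.inr (Finset.mem_sdiff.2 ⟨Finset.mem_erase.2 ⟨hxM, hxV⟩, hxA⟩))
  · -- left inverse
    intro l hl
    obtain ⟨hnd, htf⟩ := mem_words.1 hl
    have hdne : l.dropWhile (fun x => x ≠ M) ≠ [] := by
      intro h
      rw [List.dropWhile_eq_nil_iff] at h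
      have := h M (by rw [← List.mem_toFinset, htf]; exact hMV)
      simp at this
    have hdhead : (l.dropWhile (fun x => x ≠ M)).head hdne = M := by
      have h0 := List.head_dropWhile_not (fun x : ℕ => decide (x ≠ M)) (l := l) hdne
      rw [decide_eq_false_iff_not, not_ne_iff] at h0
      exact h0
    have h3 := List.cons_head_tail hdne
    rw [hdhead] at h3
    show l.takeWhile (fun x => x ≠ M) ++ M :: (l.dropWhile (fun x => x ≠ M)).tail = l
    conv_rhs => rw [← List.takeWhile_append_dropWhile (p := fun x => x ≠ M) (l := l)]
    rw [h3]
  · -- right inverse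
    rintro ⟨A, a, b⟩ hx
    obtain ⟨hA, hab⟩ := Finset.mem_sigma.1 hx
    rw [Finset.mem_powerset] at hA
    obtain ⟨haw, hbw⟩ := Finset.mem_product.1 hab
    obtain ⟨hnda, hta⟩ := mem_words.1 haw
    dsimp only at hA haw hnda hta ⊢
    have hna : ∀ x ∈ a, x ≠ M := by
      intro x hxa
      have hxA : x ∈ A := by rw [← hta, List.mem_toFinset]; exact hxa
      intro hxM
      rw [hxM] at hxA
      exact hME (hA hxA)
    obtain ⟨h1, h2⟩ := takeWhile_app M b a hna
    simp only [h1, h2, List.tail_cons, hta]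
  · intro l hl
    obtain ⟨hnd, htf⟩ := mem_words.1 hl
    have hdne : l.dropWhile (fun x => x ≠ M) ≠ [] := by
      intro h
      rw [List.dropWhile_eq_nil_iff] at h
      have := h M (by rw [← List.mem_toFinset, htf]; exact hMV)
      simp at this
    have hdhead : (l.dropWhile (fun x => x ≠ M)).head hdne = M := by
      have h0 := List.head_dropWhile_not (fun x : ℕ => decide (x ≠ M)) (l := l) hdne
      rw [decide_eq_false_iff_not, not_ne_iff] at h0
      exact h0
    have h3 := List.cons_head_tail hdne
    rw [hdhead] at h3
    dsimp only
    congr 1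
    rw [h3]
    exact (List.takeWhile_append_dropWhile (p := fun x => x ≠ M) (l := l)).symm

end

noncomputable section

/-- descent generating polynomial -/
def LW (V : Finset ℕ) : Polynomial ℤ := ∑ l ∈ words V, (X : Polynomial ℤ) ^ desL l

/-- gamma form -/
def RW (V : Finset ℕ) : Polynomial ℤ :=
  ∑ l ∈ (words V).filter TG,
    (X : Polynomial ℤ) ^ desL l * (1 + X) ^ (V.card - 1 - 2 * desL l)

lemma mem_words_lt {M : ℕ} {A : Finset ℕ} (hA : ∀ x ∈ A, x < M) {a : List ℕ}
    (ha : a ∈ words A) : ∀ x ∈ a, x < M := by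
  intro x hx
  exact hA x (by rw [← (mem_words.1 ha).2, List.mem_toFinset]; exact hx)

lemma words_card_len {A : Finset ℕ} {a : List ℕ} (ha : a ∈ words A) :
    a.length = A.card := length_mem_words ha

lemma RW_eq_sum_ite (V : Finset ℕ) :
    RW V = ∑ l ∈ words V,
      (if TG l then (X : Polynomial ℤ) ^ desL l * (1 + X) ^ (V.card - 1 - 2 * desL l) else 0) := by
  rw [RW, Finset.sum_filter]

lemma inner_L {M : ℕ} {A B : Finset ℕ} (hA : ∀ x ∈ A, x < M) (hB : ∀ x ∈ B, x < M)
    (hBne : B.Nonempty) :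
    (∑ p ∈ (words A) ×ˢ (words B), (X : Polynomial ℤ) ^ desL (p.1 ++ M :: p.2))
      = X * LW A * LW B := by
  rw [Finset.sum_product]
  have : ∀ a ∈ words A, ∀ b ∈ words B,
      (X : Polynomial ℤ) ^ desL (a ++ M :: b) = X * X ^ desL a * X ^ desL b := by
    intro a ha b hb
    rw [desL_append M b (mem_words_lt hB hb) a (mem_words_lt hA ha),
      if_neg (ne_nil_of_mem_words hb hBne)]
    ring
  rw [Finset.sum_congr rfl fun a ha => Finset.sum_congr rfl fun b hb => this a ha b hb]
  rw [mul_assoc, LW, LW, Finset.sum_mul_sum, Finset.mul_sum]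
  apply Finset.sum_congr rfl
  intro a _
  rw [Finset.mul_sum]
  apply Finset.sum_congr rfl
  intro b _
  ring

lemma inner_L_end {M : ℕ} {A : Finset ℕ} (hA : ∀ x ∈ A, x < M) :
    (∑ p ∈ (words A) ×ˢ (words (∅ : Finset ℕ)), (X : Polynomial ℤ) ^ desL (p.1 ++ M :: p.2))
      = LW A := by
  rw [words_empty, Finset.sum_product]
  simp only [Finset.sum_singleton]
  rw [LW]
  apply Finset.sum_congr rfl
  intro a ha
  rw [desL_append M [] (by simp) a (mem_words_lt hA ha)]
  have : desL ([] : List ℕ) = 0 := rfl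
  rw [this]
  simp

lemma inner_R {M : ℕ} {A B : Finset ℕ} (hA : ∀ x ∈ A, x < M) (hB : ∀ x ∈ B, x < M)
    (hAne : A.Nonempty) (hBne : B.Nonempty) (n : ℕ) (hn : n = A.card + B.card + 1) :
    (∑ p ∈ (words A) ×ˢ (words B),
        (if TG (p.1 ++ M :: p.2) then
          (X : Polynomial ℤ) ^ desL (p.1 ++ M :: p.2) * (1 + X) ^ (n - 1 - 2 * desL (p.1 ++ M :: p.2))
        else 0))
      = X * RW A * RW B := by
  rw [Finset.sum_product]
  have key : ∀ a ∈ words A, ∀ b ∈ words B,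
      (if TG (a ++ M :: b) then
          (X : Polynomial ℤ) ^ desL (a ++ M :: b) * (1 + X) ^ (n - 1 - 2 * desL (a ++ M :: b))
        else 0)
      = X * ((if TG a then (X : Polynomial ℤ) ^ desL a * (1 + X) ^ (A.card - 1 - 2 * desL a) else 0)
          * (if TG b then (X : Polynomial ℤ) ^ desL b * (1 + X) ^ (B.card - 1 - 2 * desL b) else 0)) := by
    intro a ha b hb
    have hane := ne_nil_of_mem_words ha hAne
    have hbne := ne_nil_of_mem_words hb hBne
    have hla : a.length = A.card := words_card_len ha
    have hlb : b.length = B.card := words_card_len hb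
    rw [desL_append M b (mem_words_lt hB hb) a (mem_words_lt hA ha), if_neg hbne,
      TG_append M a b (mem_words_lt hA ha) (mem_words_lt hB hb)]
    by_cases hta : TG a
    · by_cases htb : TG b
      · rw [if_pos ⟨hta, htb, fun h => absurd h hane⟩, if_pos hta, if_pos htb]
        have ba := TG_bound a hta hane
        have bb := TG_bound b htb hbne
        rw [hla] at ba
        rw [hlb] at bb
        have harith : n - 1 - 2 * (desL a + desL b + 1)
            = (A.card - 1 - 2 * desL a) + (B.card - 1 - 2 * desL b) := by omega
        rw [harith, pow_add]
        ring
      · rw [if_neg (by tauto), if_neg htb]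
        ring
    · rw [if_neg (by tauto), if_neg hta]
      ring
  rw [Finset.sum_congr rfl fun a ha => Finset.sum_congr rfl fun b hb => key a ha b hb]
  rw [mul_assoc, RW_eq_sum_ite, RW_eq_sum_ite, Finset.sum_mul_sum, Finset.mul_sum]
  apply Finset.sum_congr rfl
  intro a _
  rw [Finset.mul_sum]

lemma inner_R_end {M : ℕ} {A : Finset ℕ} (hA : ∀ x ∈ A, x < M) (hAne : A.Nonempty)
    (n : ℕ) (hn : n = A.card + 1) :
    (∑ p ∈ (words A) ×ˢ (words (∅ : Finset ℕ)),
        (if TG (p.1 ++ M :: p.2) then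
          (X : Polynomial ℤ) ^ desL (p.1 ++ M :: p.2) * (1 + X) ^ (n - 1 - 2 * desL (p.1 ++ M :: p.2))
        else 0))
      = (1 + X) * RW A := by
  rw [words_empty, Finset.sum_product]
  simp only [Finset.sum_singleton]
  rw [RW_eq_sum_ite, Finset.mul_sum]
  apply Finset.sum_congr rfl
  intro a ha
  have hane := ne_nil_of_mem_words ha hAne
  have hla : a.length = A.card := words_card_len ha
  rw [desL_append M [] (by simp) a (mem_words_lt hA ha),
    TG_append M a [] (mem_words_lt hA ha) (by simp)]
  have hnil : desL ([] : List ℕ) = 0 := rfl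
  simp only [hnil, if_true, add_zero]
  by_cases hta : TG a
  · have hTGnil : TG ([] : List ℕ) := ⟨trivial, trivial⟩
    rw [if_pos (show TG a ∧ TG ([] : List ℕ) ∧ (a = [] → True) from
      ⟨hta, hTGnil, fun _ => trivial⟩), if_pos hta]
    have ba := TG_bound a hta hane
    rw [hla] at ba
    have harith : n - 1 - 2 * desL a
        = (A.card - 1 - 2 * desL a) + 1 := by omega
    rw [harith, pow_add]
    ring
  · rw [if_neg (by tauto), if_neg hta]
    ring

lemma inner_R_front {M : ℕ} {B : Finset ℕ} (hB : ∀ x ∈ B, x < M) (hBne : B.Nonempty)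
    (n : ℕ) :
    (∑ p ∈ (words (∅ : Finset ℕ)) ×ˢ (words B),
        (if TG (p.1 ++ M :: p.2) then
          (X : Polynomial ℤ) ^ desL (p.1 ++ M :: p.2) * (1 + X) ^ (n - 1 - 2 * desL (p.1 ++ M :: p.2))
        else 0))
      = 0 := by
  rw [words_empty, Finset.sum_product]
  simp only [Finset.sum_singleton]
  apply Finset.sum_eq_zero
  intro b hb
  have hbne := ne_nil_of_mem_words hb hBne
  rw [List.nil_append, if_neg]
  rw [show (M :: b) = ([] ++ M :: b) from rfl, TG_append M [] b (by simp) (mem_words_lt hB hb)]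
  rintro ⟨_, _, h3⟩
  exact hbne (h3 rfl)

end

noncomputable section

lemma TG_nil : TG ([] : List ℕ) := ⟨trivial, trivial⟩

lemma TG_single (m : ℕ) : TG [m] := ⟨trivial, trivial⟩

lemma desL_nil : desL ([] : List ℕ) = 0 := rfl

lemma desL_single (m : ℕ) : desL [m] = 0 := rfl

lemma LW_empty : LW (∅ : Finset ℕ) = 1 := by
  rw [LW, words_empty, Finset.sum_singleton, desL_nil, pow_zero]

lemma RW_empty : RW (∅ : Finset ℕ) = 1 := by
  rw [RW, words_empty, Finset.filter_singleton, if_pos TG_nil, Finset.sum_singleton, desL_nil]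
  simp

lemma words_singleton (m : ℕ) : words {m} = {[m]} := by
  ext l
  rw [Finset.mem_singleton, mem_words]
  constructor
  · rintro ⟨h1, h2⟩
    have hlen : l.length = 1 := by
      rw [← List.toFinset_card_of_nodup h1, h2, Finset.card_singleton]
    obtain ⟨x, rfl⟩ := List.length_eq_one_iff.1 hlen
    have : x ∈ ({m} : Finset ℕ) := by rw [← h2]; simp
    rw [Finset.mem_singleton] at this
    rw [this]
  · rintro rfl
    simp

lemma LW_single (m : ℕ) : LW {m} = 1 := by
  rw [LW, words_singleton, Finset.sum_singleton, desL_single, pow_zero]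

lemma RW_single (m : ℕ) : RW {m} = 1 := by
  rw [RW, words_singleton, Finset.filter_singleton, if_pos (TG_single m),
    Finset.sum_singleton, desL_single]
  simp

theorem words_gamma (V : Finset ℕ) : LW V = RW V := by
  induction V using Finset.strongInduction with
  | _ V ih =>
  rcases V.eq_empty_or_nonempty with rfl | hV
  · rw [LW_empty, RW_empty]
  set M := V.max' hV with hM
  set E := V.erase M with hE
  have hMV : M ∈ V := V.max'_mem hV
  have hEV : E ⊂ V := Finset.erase_ssubset hMV
  have hlt : ∀ x ∈ E, x < M := by
    intro x hx
    obtain ⟨hne, hxV⟩ := Finset.mem_erase.1 hx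
    exact lt_of_le_of_ne (Finset.le_max' V x hxV) hne
  have hcardpos : 1 ≤ V.card := Finset.card_pos.2 hV
  have hcardV : V.card = E.card + 1 := by
    rw [hE, Finset.card_erase_of_mem hMV]
    omega
  rcases E.eq_empty_or_nonempty with hE0 | hEne
  · have hVM : V = {M} := by
      apply Finset.eq_singleton_iff_unique_mem.2 ⟨hMV, ?_⟩
      intro x hx
      by_contra hne
      have : x ∈ E := Finset.mem_erase.2 ⟨hne, hx⟩
      rw [hE0] at this
      simp at this
    rw [hVM, LW_single, RW_single]
  -- main case
  have key := sum_words_split V hV (fun l => (X : Polynomial ℤ) ^ desL l)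
  have key2 := sum_words_split V hV
    (fun l => if TG l then (X : Polynomial ℤ) ^ desL l * (1 + X) ^ (V.card - 1 - 2 * desL l) else 0)
  rw [LW, key, RW_eq_sum_ite, key2]
  have hEp : E ∈ E.powerset := Finset.mem_powerset_self E
  have h0p : (∅ : Finset ℕ) ∈ E.powerset.erase E :=
    Finset.mem_erase.2 ⟨Ne.symm hEne.ne_empty, Finset.empty_mem_powerset E⟩
  rw [← Finset.sum_erase_add E.powerset _ hEp, ← Finset.sum_erase_add _ _ h0p,
    ← Finset.sum_erase_add E.powerset _ hEp, ← Finset.sum_erase_add _ _ h0p]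
  -- boundary term computations
  have hTLE : (∑ p ∈ (words E) ×ˢ (words (E \ E)), (X : Polynomial ℤ) ^ desL (p.1 ++ M :: p.2))
      = LW E := by
    rw [Finset.sdiff_self]
    exact inner_L_end hlt
  have hTL0 : (∑ p ∈ (words (∅ : Finset ℕ)) ×ˢ (words (E \ ∅)), (X : Polynomial ℤ) ^ desL (p.1 ++ M :: p.2))
      = X * LW E := by
    rw [Finset.sdiff_empty, inner_L (by simp) hlt hEne, LW_empty, mul_one]
  have hTRE : (∑ p ∈ (words E) ×ˢ (words (E \ E)),
      (if TG (p.1 ++ M :: p.2) then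
        (X : Polynomial ℤ) ^ desL (p.1 ++ M :: p.2) * (1 + X) ^ (V.card - 1 - 2 * desL (p.1 ++ M :: p.2))
      else 0)) = (1 + X) * RW E := by
    rw [Finset.sdiff_self]
    exact inner_R_end hlt hEne V.card (by omega)
  have hTR0 : (∑ p ∈ (words (∅ : Finset ℕ)) ×ˢ (words (E \ ∅)),
      (if TG (p.1 ++ M :: p.2) then
        (X : Polynomial ℤ) ^ desL (p.1 ++ M :: p.2) * (1 + X) ^ (V.card - 1 - 2 * desL (p.1 ++ M :: p.2))
      else 0)) = 0 := by
    rw [Finset.sdiff_empty]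
    exact inner_R_front hlt hEne V.card
  rw [hTLE, hTL0, hTRE, hTR0]
  have hrest : (∑ A ∈ (E.powerset.erase E).erase ∅,
        ∑ p ∈ (words A) ×ˢ (words (E \ A)), (X : Polynomial ℤ) ^ desL (p.1 ++ M :: p.2))
      = (∑ A ∈ (E.powerset.erase E).erase ∅,
        ∑ p ∈ (words A) ×ˢ (words (E \ A)),
          (if TG (p.1 ++ M :: p.2) then
            (X : Polynomial ℤ) ^ desL (p.1 ++ M :: p.2) * (1 + X) ^ (V.card - 1 - 2 * desL (p.1 ++ M :: p.2))
          else 0)) := by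
    apply Finset.sum_congr rfl
    intro A hA
    obtain ⟨hAne0, hA1⟩ := Finset.mem_erase.1 hA
    obtain ⟨hAneE, hA2⟩ := Finset.mem_erase.1 hA1
    have hAE : A ⊆ E := Finset.mem_powerset.1 hA2
    have hAne : A.Nonempty := Finset.nonempty_of_ne_empty hAne0
    have hBne : (E \ A).Nonempty := Finset.sdiff_nonempty.2 (fun h => hAneE (Finset.Subset.antisymm hAE h))
    have hAlt : ∀ x ∈ A, x < M := fun x hx => hlt x (hAE hx)
    have hBlt : ∀ x ∈ E \ A, x < M := fun x hx => hlt x (Finset.sdiff_subset hx)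
    have hcards : V.card = A.card + (E \ A).card + 1 := by
      rw [Finset.card_sdiff_of_subset hAE]
      have := Finset.card_le_card hAE
      omega
    rw [inner_L hAlt hBlt hBne, inner_R hAlt hBlt hAne hBne V.card hcards]
    rw [ih A (lt_of_le_of_lt hAE hEV), ih (E \ A) (lt_of_le_of_lt Finset.sdiff_subset hEV)]
  rw [hrest, ih E hEV]
  ring
end

noncomputable section

lemma desL_cons_len (x : ℕ) (l : List ℕ) :
    desL (x :: l) = (if h : 0 < l.length then (if l[0] < x then 1 else 0) else 0) + desL l := by
  cases l with
  | nil => simp [desL]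
  | cons y r =>
    rw [desL_cons_cons]
    simp

lemma desL_ofFn_sum : ∀ (n : ℕ) (f : ℕ → ℕ),
    desL (List.ofFn (fun i : Fin n => f (i : ℕ)))
      = ∑ i ∈ Finset.range (n - 1), (if f (i + 1) < f i then 1 else 0) := by
  intro n
  induction n with
  | zero => intro f; simp [desL]
  | succ m ih =>
    intro f
    cases m with
    | zero => simp [desL, List.ofFn_succ]
    | succ k =>
      rw [List.ofFn_succ, desL_cons_len]
      have hfun : (fun i : Fin (k + 1) => f ((i.succ : Fin (k + 2)) : ℕ))
          = (fun i : Fin (k + 1) => (fun j => f (j + 1)) (i : ℕ)) := by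
        funext i
        rw [Fin.val_succ]
      rw [hfun, ih (fun j => f (j + 1))]
      have hlen : 0 < (List.ofFn (fun i : Fin (k + 1) => (fun j => f (j + 1)) (i : ℕ))).length := by
        simp
      rw [dif_pos hlen]
      have hget : (List.ofFn (fun i : Fin (k + 1) => (fun j => f (j + 1)) (i : ℕ)))[0]'hlen
          = f 1 := by
        rw [List.getElem_ofFn]
      rw [hget]
      have : (k + 2 - 1) = (k + 1 - 1) + 1 := by omega
      rw [this, Finset.sum_range_succ' (fun i => if f (i + 1) < f i then 1 else 0) (k + 1 - 1)]
      simp only [Fin.val_zero, zero_add]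
      rw [add_comm]
      congr 1

/-- the value of `w` at position `k`, as a total function -/
def FV {n : ℕ} (w : Equiv.Perm (Fin n)) : ℕ → ℕ :=
  fun k => if h : k < n then (w ⟨k, h⟩ : ℕ) else 0

lemma FV_lt {n : ℕ} (w : Equiv.Perm (Fin n)) (k : ℕ) (hk : k < n) : FV w k < n := by
  rw [FV, dif_pos hk]
  exact (w ⟨k, hk⟩).isLt

def wordOf {n : ℕ} (w : Equiv.Perm (Fin n)) : List ℕ := List.ofFn (fun i => (w i : ℕ))

lemma wordOf_eq_ofFn {n : ℕ} (w : Equiv.Perm (Fin n)) :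
    wordOf w = List.ofFn (fun i : Fin n => FV w (i : ℕ)) := by
  unfold wordOf FV
  congr 1
  funext i
  rw [dif_pos i.isLt]

lemma des_eq_sum {n : ℕ} (w : Equiv.Perm (Fin n)) :
    des w = ∑ i ∈ Finset.range (n - 1), (if FV w (i + 1) < FV w i then 1 else 0) := by
  rw [des, Finset.card_filter]
  have h1 : ∀ i : Fin n, (∃ j : Fin n, (j : ℕ) = (i : ℕ) + 1 ∧ w j < w i)
      ↔ ((i : ℕ) + 1 < n ∧ FV w ((i : ℕ) + 1) < FV w (i : ℕ)) := by
    intro i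
    constructor
    · rintro ⟨j, hj1, hj2⟩
      have hjlt : (i : ℕ) + 1 < n := hj1 ▸ j.isLt
      refine ⟨hjlt, ?_⟩
      simp only [FV]
      rw [dif_pos hjlt, dif_pos i.isLt]
      have hje : (⟨(i : ℕ) + 1, hjlt⟩ : Fin n) = j := Fin.ext hj1.symm
      have hie : (⟨(i : ℕ), i.isLt⟩ : Fin n) = i := Fin.eta i i.isLt
      rw [hje, hie]
      exact hj2
    · rintro ⟨hlt, h2⟩
      refine ⟨⟨(i : ℕ) + 1, hlt⟩, rfl, ?_⟩
      simp only [FV] at h2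
      rw [dif_pos hlt, dif_pos i.isLt] at h2
      have hie : (⟨(i : ℕ), i.isLt⟩ : Fin n) = i := Fin.eta i i.isLt
      rw [hie] at h2
      exact h2
  have h2 : (∑ i : Fin n, if (∃ j : Fin n, (j : ℕ) = (i : ℕ) + 1 ∧ w j < w i) then 1 else 0)
      = ∑ i : Fin n, (fun k : ℕ => if (k + 1 < n ∧ FV w (k + 1) < FV w k) then 1 else 0) (i : ℕ) := by
    apply Finset.sum_congr rfl
    intro i _
    exact if_congr (h1 i) rfl rfl
  rw [h2, Fin.sum_univ_eq_sum_range (fun k : ℕ => if (k + 1 < n ∧ FV w (k + 1) < FV w k) then 1 else 0) n]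
  rcases Nat.eq_zero_or_pos n with rfl | hn
  · simp
  · obtain ⟨m, rfl⟩ : ∃ m, n = m + 1 := ⟨n - 1, by omega⟩
    rw [Finset.sum_range_succ]
    have hz : ¬ (m + 1 < m + 1 ∧ FV w (m + 1) < FV w m) := by
      rintro ⟨h, _⟩; omega
    rw [if_neg hz, add_zero]
    have hm1 : m + 1 - 1 = m := by omega
    rw [hm1]
    apply Finset.sum_congr rfl
    intro i hi
    rw [Finset.mem_range] at hi
    exact if_congr (Iff.intro (fun h => h.2) (fun h => ⟨by omega, h⟩)) rfl rfl

lemma des_eq_desL {n : ℕ} (w : Equiv.Perm (Fin n)) : des w = desL (wordOf w) := by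
  rw [wordOf_eq_ofFn, desL_ofFn_sum, des_eq_sum]

end

noncomputable section

/-- reverse-complement conjugation -/
def RP {n : ℕ} (w : Equiv.Perm (Fin n)) : Equiv.Perm (Fin n) :=
  (Fin.revPerm.trans w).trans Fin.revPerm

lemma RP_apply {n : ℕ} (w : Equiv.Perm (Fin n)) (i : Fin n) :
    RP w i = Fin.rev (w (Fin.rev i)) := rfl

lemma RP_RP {n : ℕ} (w : Equiv.Perm (Fin n)) : RP (RP w) = w := by
  ext i
  simp [RP_apply, Fin.rev_rev]

lemma RP_val {n : ℕ} (w : Equiv.Perm (Fin n)) (k : ℕ) (hk : k < n) :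
    ((RP w) ⟨k, hk⟩ : ℕ) = n - 1 - (w ⟨n - 1 - k, by omega⟩ : ℕ) := by
  rw [RP_apply]
  have hrev : Fin.rev (⟨k, hk⟩ : Fin n) = ⟨n - 1 - k, by omega⟩ := by
    apply Fin.ext
    rw [Fin.val_rev]
    show n - (k + 1) = n - 1 - k
    omega
  rw [hrev, Fin.val_rev]
  have hb := (w (⟨n - 1 - k, by omega⟩ : Fin n)).isLt
  omega

lemma NI_iff (l : List ℕ) :
    NI l ↔ ∀ (h : 1 < l.length), ¬ l[1] < l[0]'(by omega) := by
  cases l with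
  | nil => simp [NI]
  | cons x l' =>
    cases l' with
    | nil => simp [NI]
    | cons y r =>
      show (¬ y < x) ↔ _
      constructor
      · intro h _
        simpa using h
      · intro h
        have := h (by simp <;> omega)
        simpa using this

lemma NDD_iff : ∀ (l : List ℕ), NDD l ↔ ∀ (i : ℕ) (h : i + 2 < l.length),
    ¬ (l[i + 1]'(by omega) < l[i]'(by omega) ∧ l[i + 2]'h < l[i + 1]'(by omega)) := by
  intro l
  induction l with
  | nil => constructor
           · intro _ i h; simp at h
           · intro _; trivial
  | cons x l' ih =>
    cases l' with
    | nil =>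
      constructor
      · intro _ i h; simp at h
      · intro _; trivial
    | cons y r =>
      cases r with
      | nil =>
        constructor
        · intro _ i h; simp at h
        · intro _; trivial
      | cons z r' =>
        show (¬ (y < x ∧ z < y) ∧ NDD (y :: z :: r')) ↔ _
        rw [ih]
        constructor
        · rintro ⟨h1, h2⟩ i h
          cases i with
          | zero => simpa using h1
          | succ i' =>
            have hlen : i' + 2 < (y :: z :: r').length := by
              simp at h ⊢; omega
            have := h2 i' hlen
            simpa using this
        · intro H
          refine ⟨?_, fun i h => ?_⟩
          · have := H 0 (by simp)
            simpa using this
          · have hlen : (i + 1) + 2 < (x :: y :: z :: r').length := by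
              simp at h ⊢; omega
            have := H (i + 1) hlen
            simpa using this

lemma wordOf_length {n : ℕ} (w : Equiv.Perm (Fin n)) : (wordOf w).length = n := by
  simp [wordOf]

lemma wordOf_get {n : ℕ} (w : Equiv.Perm (Fin n)) (k : ℕ) (hk : k < (wordOf w).length) :
    (wordOf w)[k] = (w ⟨k, by rwa [wordOf_length] at hk⟩ : ℕ) := by
  simp [wordOf]

lemma NFD_iff' {n : ℕ} (w : Equiv.Perm (Fin n)) :
    NoFinalDescent w ↔ (∀ (h : 2 ≤ n), ¬ w ⟨n - 1, by omega⟩ < w ⟨n - 2, by omega⟩) := by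
  constructor
  · intro H h
    exact H ⟨n - 2, by omega⟩ ⟨n - 1, by omega⟩ (by simp <;> omega) (by simp <;> omega)
  · intro H i j hij hjn
    have h2 : 2 ≤ n := by omega
    have hi : (⟨n - 2, by omega⟩ : Fin n) = i := Fin.ext (by simp <;> omega)
    have hj : (⟨n - 1, by omega⟩ : Fin n) = j := Fin.ext (by simp <;> omega)
    intro hlt
    exact H h2 (by rwa [hi, hj])

lemma NDD_iff' {n : ℕ} (w : Equiv.Perm (Fin n)) :
    NoDoubleDescent w ↔ (∀ (m : ℕ) (h : m + 2 < n),
      ¬ (w ⟨m + 1, by omega⟩ < w ⟨m, by omega⟩ ∧ w ⟨m + 2, h⟩ < w ⟨m + 1, by omega⟩)) := by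
  constructor
  · intro H m h
    exact H ⟨m, by omega⟩ ⟨m + 1, by omega⟩ ⟨m + 2, h⟩ rfl rfl
  · intro H i j k hij hjk
    have h : (i : ℕ) + 2 < n := by
      have := k.isLt
      omega
    have hi : (⟨(i : ℕ), by omega⟩ : Fin n) = i := Fin.eta _ _
    have hj : (⟨(i : ℕ) + 1, by omega⟩ : Fin n) = j := Fin.ext (by simp <;> omega)
    have hk : (⟨(i : ℕ) + 2, h⟩ : Fin n) = k := Fin.ext (by simp <;> omega)
    intro hlt
    exact H (i : ℕ) h (by rwa [hi, hj, hk])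

end

noncomputable section

lemma FV_RP {n : ℕ} (w : Equiv.Perm (Fin n)) (k : ℕ) (hk : k < n) :
    FV (RP w) k = n - 1 - FV w (n - 1 - k) := by
  unfold FV
  rw [dif_pos hk, dif_pos (show n - 1 - k < n by omega), RP_val]

lemma wordOf_get_FV {n : ℕ} (u : Equiv.Perm (Fin n)) (k : ℕ)
    (h : k < (wordOf u).length) : (wordOf u)[k] = FV u k := by
  rw [wordOf_get]
  unfold FV
  rw [dif_pos (by rwa [wordOf_length] at h)]

lemma des_RP {n : ℕ} (w : Equiv.Perm (Fin n)) : des (RP w) = des w := by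
  rw [des_eq_sum, des_eq_sum]
  refine Finset.sum_nbij' (i := fun i => n - 2 - i) (j := fun i => n - 2 - i) ?_ ?_ ?_ ?_ ?_
  · intro i hi
    rw [Finset.mem_range] at hi ⊢
    omega
  · intro i hi
    rw [Finset.mem_range] at hi ⊢
    omega
  · intro i hi
    rw [Finset.mem_range] at hi
    omega
  · intro i hi
    rw [Finset.mem_range] at hi
    omega
  · intro i hi
    rw [Finset.mem_range] at hi
    have h1 : i + 1 < n := by omega
    have h2 : i < n := by omega
    rw [FV_RP w (i + 1) h1, FV_RP w i h2]
    have e1 : n - 1 - (i + 1) = n - 2 - i := by omega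
    have e2 : n - 1 - i = (n - 2 - i) + 1 := by omega
    rw [e1, e2]
    have b1 := FV_lt w (n - 2 - i) (by omega)
    have b2 := FV_lt w ((n - 2 - i) + 1) (by omega)
    exact if_congr (by omega) rfl rfl

lemma FV_eq {n : ℕ} (w : Equiv.Perm (Fin n)) (k : ℕ) (hk : k < n) :
    FV w k = ((w ⟨k, hk⟩ : Fin n) : ℕ) := dif_pos hk

lemma bridge_TG {n : ℕ} (w : Equiv.Perm (Fin n)) :
    TG (wordOf (RP w)) ↔ (NoFinalDescent w ∧ NoDoubleDescent w) := by
  unfold TG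
  rw [NI_iff, NDD_iff, NFD_iff', NDD_iff']
  have hlen : (wordOf (RP w)).length = n := wordOf_length _
  constructor
  · rintro ⟨hni, hndd⟩
    constructor
    · intro h2
      have h1 : 1 < (wordOf (RP w)).length := by omega
      have H := hni h1
      rw [wordOf_get_FV, wordOf_get_FV] at H
      rw [FV_RP w 1 (by omega), FV_RP w 0 (by omega)] at H
      have b1 := FV_lt w (n - 1 - 1) (by omega)
      have b2 := FV_lt w (n - 1 - 0) (by omega)
      have e1 : n - 1 - 1 = n - 2 := by omega
      have e2 : n - 1 - 0 = n - 1 := by omega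
      rw [e1, e2] at H
      rw [e1] at b1
      rw [e2] at b2
      intro hlt
      rw [Fin.lt_def] at hlt
      apply H
      have u1 := (FV_eq w (n - 1) (by omega)).symm
      have u2 := (FV_eq w (n - 2) (by omega)).symm
      rw [u1, u2] at hlt
      omega
    · intro m hm
      have hi : (n - 3 - m) + 2 < (wordOf (RP w)).length := by omega
      have H := hndd (n - 3 - m) hi
      rw [wordOf_get_FV, wordOf_get_FV, wordOf_get_FV] at H
      rw [FV_RP w ((n - 3 - m) + 1) (by omega), FV_RP w (n - 3 - m) (by omega),
        FV_RP w ((n - 3 - m) + 2) (by omega)] at H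
      have e1 : n - 1 - ((n - 3 - m) + 1) = m + 1 := by omega
      have e2 : n - 1 - (n - 3 - m) = m + 2 := by omega
      have e3 : n - 1 - ((n - 3 - m) + 2) = m := by omega
      rw [e1, e2, e3] at H
      have b0 := FV_lt w m (by omega)
      have b1 := FV_lt w (m + 1) (by omega)
      have b2 := FV_lt w (m + 2) (by omega)
      rintro ⟨c1, c2⟩
      rw [Fin.lt_def] at c1 c2
      apply H
      have u0 := (FV_eq w m (by omega)).symm
      have u1 := (FV_eq w (m + 1) (by omega)).symm
      have u2 := (FV_eq w (m + 2) (by omega)).symm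
      rw [u0, u1] at c1
      rw [u1, u2] at c2
      constructor
      · omega
      · omega
  · rintro ⟨hnf, hnd⟩
    constructor
    · intro h1
      have h2 : 2 ≤ n := by omega
      have H := hnf h2
      rw [wordOf_get_FV, wordOf_get_FV]
      rw [FV_RP w 1 (by omega), FV_RP w 0 (by omega)]
      have e1 : n - 1 - 1 = n - 2 := by omega
      have e2 : n - 1 - 0 = n - 1 := by omega
      rw [e1, e2]
      have b1 := FV_lt w (n - 2) (by omega)
      have b2 := FV_lt w (n - 1) (by omega)
      intro hlt
      apply H
      rw [Fin.lt_def]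
      have u1 := (FV_eq w (n - 1) (by omega)).symm
      have u2 := (FV_eq w (n - 2) (by omega)).symm
      rw [u1, u2]
      omega
    · intro i hi
      rw [hlen] at hi
      have hm : (n - 3 - i) + 2 < n := by omega
      have H := hnd (n - 3 - i) hm
      rw [wordOf_get_FV, wordOf_get_FV, wordOf_get_FV]
      rw [FV_RP w (i + 1) (by omega), FV_RP w i (by omega), FV_RP w (i + 2) (by omega)]
      have e1 : n - 1 - (i + 1) = (n - 3 - i) + 1 := by omega
      have e2 : n - 1 - i = (n - 3 - i) + 2 := by omega
      have e3 : n - 1 - (i + 2) = n - 3 - i := by omega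
      rw [e1, e2, e3]
      have b0 := FV_lt w (n - 3 - i) (by omega)
      have b1 := FV_lt w ((n - 3 - i) + 1) (by omega)
      have b2 := FV_lt w ((n - 3 - i) + 2) (by omega)
      rintro ⟨c1, c2⟩
      apply H
      rw [Fin.lt_def, Fin.lt_def]
      have u0 := (FV_eq w (n - 3 - i) (by omega)).symm
      have u1 := (FV_eq w ((n - 3 - i) + 1) (by omega)).symm
      have u2 := (FV_eq w ((n - 3 - i) + 2) (by omega)).symm
      rw [u0, u1, u2]
      constructor
      · omega
      · omega

lemma wordOf_mem_words {n : ℕ} (w : Equiv.Perm (Fin n)) :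
    wordOf w ∈ words (Finset.range n) := by
  rw [mem_words]
  constructor
  · exact List.nodup_ofFn.2 (Fin.val_injective.comp w.injective)
  · ext x
    rw [List.mem_toFinset, Finset.mem_range]
    unfold wordOf
    rw [List.mem_ofFn]
    constructor
    · rintro ⟨i, rfl⟩
      exact (w i).isLt
    · intro hx
      exact ⟨w.symm ⟨x, hx⟩, by simp⟩

lemma wordOf_inj {n : ℕ} (w1 w2 : Equiv.Perm (Fin n)) (h : wordOf w1 = wordOf w2) :
    w1 = w2 := by
  unfold wordOf at h
  rw [List.ofFn_inj] at h
  ext i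
  exact congrFun h i

lemma words_surj {n : ℕ} (l : List ℕ) (hl : l ∈ words (Finset.range n)) :
    ∃ w : Equiv.Perm (Fin n), wordOf w = l := by
  obtain ⟨hnd, htf⟩ := mem_words.1 hl
  have hlen : l.length = n := by
    rw [← List.toFinset_card_of_nodup hnd, htf, Finset.card_range]
  have hmem : ∀ (k : ℕ) (hk : k < l.length), l[k] < n := by
    intro k hk
    have : l[k] ∈ l := List.getElem_mem hk
    rw [← List.mem_toFinset, htf, Finset.mem_range] at this
    exact this
  set f : Fin n → Fin n := fun i => ⟨l[(i : ℕ)]'(by omega), hmem _ (by omega)⟩ with hf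
  have hinj : Function.Injective f := by
    intro i j hij
    rw [hf] at hij
    simp only [Fin.mk.injEq] at hij
    rw [hnd.getElem_inj_iff] at hij
    exact Fin.ext hij
  refine ⟨Equiv.ofBijective f (Finite.injective_iff_bijective.1 hinj), ?_⟩
  apply List.ext_getElem
  · rw [wordOf_length, hlen]
  · intro k h1 h2
    rw [wordOf_get]
    rfl

/-- The γ-expansion of the Eulerian polynomial: the descent generating
function of `S_n` equals the sum over permutations with no final descent and
no double descent of `t^des (1+t)^(n-1-2 des)`. -/
theorem eulerian_gamma (n : ℕ) (hn : 1 ≤ n) :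
    ∑ w : Equiv.Perm (Fin n), (X : Polynomial ℤ) ^ des w
      = ∑ w ∈ Finset.univ.filter
            (fun w : Equiv.Perm (Fin n) => NoFinalDescent w ∧ NoDoubleDescent w),
          (X : Polynomial ℤ) ^ des w * (1 + X) ^ (n - 1 - 2 * des w) := by
  have hA : (∑ w : Equiv.Perm (Fin n), (X : Polynomial ℤ) ^ des w) = LW (Finset.range n) := by
    rw [LW]
    refine Finset.sum_bij (fun w _ => wordOf w) (fun w _ => wordOf_mem_words w)
      (fun w1 _ w2 _ h => wordOf_inj w1 w2 h) (fun l hl => ?_) (fun w _ => ?_)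
    · obtain ⟨w, hw⟩ := words_surj l hl
      exact ⟨w, Finset.mem_univ w, hw⟩
    · rw [des_eq_desL]
  have hB : (∑ w ∈ Finset.univ.filter
        (fun w : Equiv.Perm (Fin n) => NoFinalDescent w ∧ NoDoubleDescent w),
          (X : Polynomial ℤ) ^ des w * (1 + X) ^ (n - 1 - 2 * des w))
      = RW (Finset.range n) := by
    rw [RW]
    refine Finset.sum_bij (fun w _ => wordOf (RP w)) ?_ ?_ ?_ ?_
    · intro w hw
      rw [Finset.mem_filter] at hw
      rw [Finset.mem_filter]
      exact ⟨wordOf_mem_words (RP w), (bridge_TG w).2 hw.2⟩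
    · intro w1 h1 w2 h2 h
      have := wordOf_inj _ _ h
      have h2 := congrArg RP this
      rwa [RP_RP, RP_RP] at h2
    · intro l hl
      rw [Finset.mem_filter] at hl
      obtain ⟨w, hw⟩ := words_surj l hl.1
      refine ⟨RP w, ?_, ?_⟩
      · rw [Finset.mem_filter]
        refine ⟨Finset.mem_univ _, (bridge_TG (RP w)).1 ?_⟩
        show TG (wordOf (RP (RP w)))
        rw [RP_RP, hw]
        exact hl.2
      · show wordOf (RP (RP w)) = l
        rwa [RP_RP]
    · intro w hw
      have hd : desL (wordOf (RP w)) = des w := by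
        rw [← des_eq_desL, des_RP]
      rw [hd, Finset.card_range]
  rw [hA, hB, words_gamma]
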